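/- (Invariance of the flow force.) Let γ be real, ε₁ > 0 and α real. Suppose η, ζ, ϑ : ℝ×[0,1] → ℝ are twice continuously differentiable on the closed strip, harmonic in R, satisfy η_x² + η_y² > 0 everywhere on the closed strip, satisfy on Γ: ζ(x,1) = 1 − γ/2 − (γ/2)η(x,1)², (ζ_y + γ η η_y)² + ε₁ ϑ_y² = (1 + ε₁ − 2α(η−1))·(η_x² + η_y²) at every point (x,1), and ϑ(x,1) = 1; and satisfy η = ζ = ϑ = 0 on B. Define for each x ∈ ℝ the flow force S(x) := (1/2)∫₀¹ (η_y(ζ_y² − ζ_x²) + 2η_x ζ_x ζ_y)/(η_x² + η_y²) dy + (ε₁/2)∫₀¹ (η_y(ϑ_y² − ϑ_x²) + 2η_x ϑ_x ϑ_y)/(η_x² + η_y²) dy − [ (γ²/6)·η(x,1)³ + (α/2)·η(x,1)² − ((2α+1+ε₁)/2)·η(x,1) ]. Then S is constant: S(x₁) = S(x₂) for all x₁, x₂ ∈ ℝ. -/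

import Mathlib

/-- The closed strip `ℝ × [0,1]`. -/
def strip : Set (ℝ × ℝ) := {p : ℝ × ℝ | p.2 ∈ Set.Icc (0 : ℝ) 1}
/-- The open strip `R = ℝ × (0,1)`. -/
def stripO : Set (ℝ × ℝ) := {p : ℝ × ℝ | p.2 ∈ Set.Ioo (0 : ℝ) 1}
/-- Partial derivative in the first (horizontal) variable, taken within the closed strip
(at interior points it agrees with the usual partial derivative; on the boundary it is
the one-sided partial derivative). -/
noncomputable def pdx (f : ℝ × ℝ → ℝ) (p : ℝ × ℝ) : ℝ := fderivWithin ℝ f strip p (1, 0)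
/-- Partial derivative in the second (vertical) variable, taken within the closed strip. -/
noncomputable def pdy (f : ℝ × ℝ → ℝ) (p : ℝ × ℝ) : ℝ := fderivWithin ℝ f strip p (0, 1)

open Set MeasureTheory intervalIntegral Filter Topology

lemma stripO_open : IsOpen stripO := by
  have : stripO = (fun p : ℝ × ℝ => p.2) ⁻¹' Ioo 0 1 := rfl
  rw [this]; exact isOpen_Ioo.preimage continuous_snd

lemma stripO_subset : stripO ⊆ strip := fun p hp => ⟨le_of_lt hp.1, le_of_lt hp.2⟩

lemma strip_mem_nhds {p : ℝ × ℝ} (hp : p ∈ stripO) : strip ∈ 𝓝 p :=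
  Filter.mem_of_superset (stripO_open.mem_nhds hp) stripO_subset

lemma strip_convex : Convex ℝ strip := by
  have : strip = (LinearMap.snd ℝ ℝ ℝ) ⁻¹' Icc 0 1 := rfl
  rw [this]
  exact (convex_Icc (0:ℝ) 1).linear_preimage _

lemma strip_uniqueDiffOn : UniqueDiffOn ℝ strip := by
  apply uniqueDiffOn_convex strip_convex
  exact ⟨(0, 1/2), mem_interior_iff_mem_nhds.2 (strip_mem_nhds (by constructor <;> norm_num))⟩

lemma mem_strip_iff {x y : ℝ} : (x, y) ∈ strip ↔ y ∈ Icc (0:ℝ) 1 := Iff.rfl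

/-- Trace lemma: horizontal slices differentiate to `pdx`. -/
lemma hasDerivAt_slice_x {u : ℝ × ℝ → ℝ} (hu : ContDiffOn ℝ 1 u strip)
    {y : ℝ} (hy : y ∈ Icc (0:ℝ) 1) (x : ℝ) :
    HasDerivAt (fun t => u (t, y)) (pdx u (x, y)) x := by
  have hmem : (x, y) ∈ strip := hy
  have hdiff : HasFDerivWithinAt u (fderivWithin ℝ u strip (x, y)) strip (x, y) :=
    (hu.differentiableOn one_ne_zero (x, y) hmem).hasFDerivWithinAt
  have hline : HasDerivAt (fun t : ℝ => ((t, y) : ℝ × ℝ)) (1, 0) x :=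
    (hasDerivAt_id x).prodMk (hasDerivAt_const x y)
  have := hdiff.comp_hasDerivWithinAt x (hline.hasDerivWithinAt (s := univ))
    (fun t _ => hy)
  rw [← hasDerivWithinAt_univ]
  exact this

/-- Trace lemma: vertical slices differentiate to `pdy` (at interior heights we won't
need within; we state the general within-version only where needed). -/
lemma hasDerivAt_slice_y_cont {u : ℝ × ℝ → ℝ} (hu : ContDiffOn ℝ 1 u strip) :
    ContinuousOn (pdx u) strip := by
  have h1 : ContinuousOn (fderivWithin ℝ u strip) strip :=
    hu.continuousOn_fderivWithin strip_uniqueDiffOn le_rfl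
  exact (ContinuousLinearMap.apply ℝ ℝ ((1:ℝ), (0:ℝ))).continuous.comp_continuousOn h1

lemma pdy_continuousOn {u : ℝ × ℝ → ℝ} (hu : ContDiffOn ℝ 1 u strip) :
    ContinuousOn (pdy u) strip := by
  have h1 : ContinuousOn (fderivWithin ℝ u strip) strip :=
    hu.continuousOn_fderivWithin strip_uniqueDiffOn le_rfl
  exact (ContinuousLinearMap.apply ℝ ℝ ((0:ℝ), (1:ℝ))).continuous.comp_continuousOn h1

lemma pdx_contDiffOn {u : ℝ × ℝ → ℝ} (hu : ContDiffOn ℝ 2 u strip) :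
    ContDiffOn ℝ 1 (pdx u) strip := by
  have h1 : ContDiffOn ℝ 1 (fderivWithin ℝ u strip) strip :=
    hu.fderivWithin strip_uniqueDiffOn (by norm_num)
  exact (ContinuousLinearMap.apply ℝ ℝ ((1:ℝ), (0:ℝ))).contDiff.comp_contDiffOn h1

lemma pdy_contDiffOn {u : ℝ × ℝ → ℝ} (hu : ContDiffOn ℝ 2 u strip) :
    ContDiffOn ℝ 1 (pdy u) strip := by
  have h1 : ContDiffOn ℝ 1 (fderivWithin ℝ u strip) strip :=
    hu.fderivWithin strip_uniqueDiffOn (by norm_num)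
  exact (ContinuousLinearMap.apply ℝ ℝ ((0:ℝ), (1:ℝ))).contDiff.comp_contDiffOn h1

/-! ### Interior second-derivative lemmas -/

/-- Horizontal slice of a within-partial-derivative, at an interior point. -/
lemma hasDerivAt_pd_x {u : ℝ × ℝ → ℝ} (hu : ContDiffOn ℝ 2 u strip)
    {x y : ℝ} (hp : (x, y) ∈ stripO) (v : ℝ × ℝ) :
    HasDerivAt (fun t => fderivWithin ℝ u strip (t, y) v)
      (fderiv ℝ (fderiv ℝ u) (x, y) (1, 0) v) x := by
  have hCA : ContDiffAt ℝ 2 u (x, y) := hu.contDiffAt (strip_mem_nhds hp)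
  have hF : ContDiffAt ℝ 1 (fderiv ℝ u) (x, y) := hCA.fderiv_right (by norm_num)
  have hFd : DifferentiableAt ℝ (fderiv ℝ u) (x, y) := hF.differentiableAt one_ne_zero
  have hline : HasDerivAt (fun t : ℝ => ((t, y) : ℝ × ℝ)) (1, 0) x :=
    (hasDerivAt_id x).prodMk (hasDerivAt_const x y)
  have hcomp : HasDerivAt (fun t => fderiv ℝ u (t, y))
      (fderiv ℝ (fderiv ℝ u) (x, y) (1, 0)) x := by
    have := hFd.hasFDerivAt.comp_hasDerivAt x hline
    exact this
  have happ : HasDerivAt (fun t => fderiv ℝ u (t, y) v)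
      (fderiv ℝ (fderiv ℝ u) (x, y) (1, 0) v) x := by
    have := hcomp.clm_apply (hasDerivAt_const x v)
    simpa using this
  apply happ.congr_of_eventuallyEq
  have hev : {t : ℝ | (t, y) ∈ stripO} ∈ 𝓝 x := by
    have hc : Continuous (fun t : ℝ => ((t, y) : ℝ × ℝ)) := by fun_prop
    exact hc.isOpen_preimage _ stripO_open |>.mem_nhds hp
  filter_upwards [hev] with t ht
  rw [fderivWithin_of_mem_nhds (strip_mem_nhds ht)]

/-- Vertical slice of a within-partial-derivative, at an interior point. -/
lemma hasDerivAt_pd_y {u : ℝ × ℝ → ℝ} (hu : ContDiffOn ℝ 2 u strip)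
    {x y : ℝ} (hp : (x, y) ∈ stripO) (v : ℝ × ℝ) :
    HasDerivAt (fun s => fderivWithin ℝ u strip (x, s) v)
      (fderiv ℝ (fderiv ℝ u) (x, y) (0, 1) v) y := by
  have hCA : ContDiffAt ℝ 2 u (x, y) := hu.contDiffAt (strip_mem_nhds hp)
  have hF : ContDiffAt ℝ 1 (fderiv ℝ u) (x, y) := hCA.fderiv_right (by norm_num)
  have hFd : DifferentiableAt ℝ (fderiv ℝ u) (x, y) := hF.differentiableAt one_ne_zero
  have hline : HasDerivAt (fun s : ℝ => ((x, s) : ℝ × ℝ)) (0, 1) y :=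
    (hasDerivAt_const y x).prodMk (hasDerivAt_id y)
  have hcomp : HasDerivAt (fun s => fderiv ℝ u (x, s))
      (fderiv ℝ (fderiv ℝ u) (x, y) (0, 1)) y := hFd.hasFDerivAt.comp_hasDerivAt y hline
  have happ : HasDerivAt (fun s => fderiv ℝ u (x, s) v)
      (fderiv ℝ (fderiv ℝ u) (x, y) (0, 1) v) y := by
    have := hcomp.clm_apply (hasDerivAt_const y v)
    simpa using this
  apply happ.congr_of_eventuallyEq
  have hev : {s : ℝ | (x, s) ∈ stripO} ∈ 𝓝 y := by
    have hc : Continuous (fun s : ℝ => ((x, s) : ℝ × ℝ)) := by fun_prop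
    exact hc.isOpen_preimage _ stripO_open |>.mem_nhds hp
  filter_upwards [hev] with s hs
  rw [fderivWithin_of_mem_nhds (strip_mem_nhds hs)]

/-- Symmetry of the second derivative at interior points. -/
lemma symm2 {u : ℝ × ℝ → ℝ} (hu : ContDiffOn ℝ 2 u strip)
    {p : ℝ × ℝ} (hp : p ∈ stripO) (v w : ℝ × ℝ) :
    fderiv ℝ (fderiv ℝ u) p v w = fderiv ℝ (fderiv ℝ u) p w v := by
  have hCA : ContDiffAt ℝ 2 u p := hu.contDiffAt (strip_mem_nhds hp)
  exact (hCA.isSymmSndFDerivAt (by simp [minSmoothness_of_isRCLikeNormedField])) v w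

/-- At interior points, iterated within-partials agree with the true second derivative. -/
lemma pd_pd_interior {u : ℝ × ℝ → ℝ} (hu : ContDiffOn ℝ 2 u strip)
    {p : ℝ × ℝ} (hp : p ∈ stripO) (v w : ℝ × ℝ) :
    fderivWithin ℝ (fun q => fderivWithin ℝ u strip q v) strip p w
      = fderiv ℝ (fderiv ℝ u) p w v := by
  rw [fderivWithin_of_mem_nhds (strip_mem_nhds hp)]
  have hev : (fun q => fderivWithin ℝ u strip q v) =ᶠ[𝓝 p] (fun q => fderiv ℝ u q v) := by
    filter_upwards [stripO_open.mem_nhds hp] with q hq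
    rw [fderivWithin_of_mem_nhds (strip_mem_nhds hq)]
  rw [hev.fderiv_eq]
  have hCA : ContDiffAt ℝ 2 u p := hu.contDiffAt (strip_mem_nhds hp)
  have hFd : DifferentiableAt ℝ (fderiv ℝ u) p :=
    (hCA.fderiv_right (m := 1) (by norm_num)).differentiableAt one_ne_zero
  have hc : HasFDerivAt (fun q => fderiv ℝ u q v)
      ((ContinuousLinearMap.apply ℝ ℝ v).comp (fderiv ℝ (fderiv ℝ u) p)) p :=
    (ContinuousLinearMap.apply ℝ ℝ v).hasFDerivAt.comp p hFd.hasFDerivAt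
  rw [hc.fderiv]
  rfl

lemma pdx_pdx_interior {u : ℝ × ℝ → ℝ} (hu : ContDiffOn ℝ 2 u strip)
    {p : ℝ × ℝ} (hp : p ∈ stripO) :
    pdx (pdx u) p = fderiv ℝ (fderiv ℝ u) p (1, 0) (1, 0) :=
  pd_pd_interior hu hp (1, 0) (1, 0)

lemma pdy_pdy_interior {u : ℝ × ℝ → ℝ} (hu : ContDiffOn ℝ 2 u strip)
    {p : ℝ × ℝ} (hp : p ∈ stripO) :
    pdy (pdy u) p = fderiv ℝ (fderiv ℝ u) p (0, 1) (0, 1) :=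
  pd_pd_interior hu hp (0, 1) (0, 1)

/-! ### The flux components -/

noncomputable def PP (η u : ℝ × ℝ → ℝ) : ℝ × ℝ → ℝ := fun p =>
  (pdy η p * ((pdy u p) ^ 2 - (pdx u p) ^ 2) + 2 * pdx η p * pdx u p * pdy u p)
    / ((pdx η p) ^ 2 + (pdy η p) ^ 2)

noncomputable def QQ (η u : ℝ × ℝ → ℝ) : ℝ × ℝ → ℝ := fun p =>
  (pdx η p * ((pdy u p) ^ 2 - (pdx u p) ^ 2) - 2 * pdy η p * pdx u p * pdy u p)
    / ((pdx η p) ^ 2 + (pdy η p) ^ 2)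

lemma PP_contDiffOn {η u : ℝ × ℝ → ℝ} (hηC : ContDiffOn ℝ 2 η strip)
    (huC : ContDiffOn ℝ 2 u strip)
    (hgrad : ∀ p ∈ strip, 0 < (pdx η p) ^ 2 + (pdy η p) ^ 2) :
    ContDiffOn ℝ 1 (PP η u) strip := by
  have ha := pdx_contDiffOn hηC
  have hb := pdy_contDiffOn hηC
  have hc := pdx_contDiffOn huC
  have hd := pdy_contDiffOn huC
  unfold PP
  exact ContDiffOn.div
    ((hb.mul ((hd.pow 2).sub (hc.pow 2))).add (((contDiffOn_const.mul ha).mul hc).mul hd))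
    ((ha.pow 2).add (hb.pow 2))
    (fun p hp => ne_of_gt (hgrad p hp))

lemma QQ_contDiffOn {η u : ℝ × ℝ → ℝ} (hηC : ContDiffOn ℝ 2 η strip)
    (huC : ContDiffOn ℝ 2 u strip)
    (hgrad : ∀ p ∈ strip, 0 < (pdx η p) ^ 2 + (pdy η p) ^ 2) :
    ContDiffOn ℝ 1 (QQ η u) strip := by
  have ha := pdx_contDiffOn hηC
  have hb := pdy_contDiffOn hηC
  have hc := pdx_contDiffOn huC
  have hd := pdy_contDiffOn huC
  unfold QQ
  exact ContDiffOn.div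
    ((ha.mul ((hd.pow 2).sub (hc.pow 2))).sub (((contDiffOn_const.mul hb).mul hc).mul hd))
    ((ha.pow 2).add (hb.pow 2))
    (fun p hp => ne_of_gt (hgrad p hp))

/-- The core divergence identity: at interior points, the vertical derivative of `QQ`
is minus the horizontal (within-)derivative of `PP`. -/
lemma core_deriv {η u : ℝ × ℝ → ℝ} (hηC : ContDiffOn ℝ 2 η strip)
    (huC : ContDiffOn ℝ 2 u strip)
    (hηH : ∀ p ∈ stripO, pdx (pdx η) p + pdy (pdy η) p = 0)
    (huH : ∀ p ∈ stripO, pdx (pdx u) p + pdy (pdy u) p = 0)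
    (hgrad : ∀ p ∈ strip, 0 < (pdx η p) ^ 2 + (pdy η p) ^ 2)
    {x y : ℝ} (hp : (x, y) ∈ stripO) :
    HasDerivAt (fun s => QQ η u (x, s)) (-(pdx (PP η u) (x, y))) y := by
  have hpS : (x, y) ∈ strip := stripO_subset hp
  have hden0 : (pdx η (x, y)) ^ 2 + (pdy η (x, y)) ^ 2 ≠ 0 := ne_of_gt (hgrad _ hpS)
  -- second derivatives
  set A1 := fderiv ℝ (fderiv ℝ η) (x, y) (1, 0) (1, 0) with hA1
  set A2 := fderiv ℝ (fderiv ℝ η) (x, y) (1, 0) (0, 1) with hA2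
  set C1 := fderiv ℝ (fderiv ℝ u) (x, y) (1, 0) (1, 0) with hC1
  set C2 := fderiv ℝ (fderiv ℝ u) (x, y) (1, 0) (0, 1) with hC2
  -- harmonicity
  have hηh : fderiv ℝ (fderiv ℝ η) (x, y) (0, 1) (0, 1) = -A1 := by
    have := hηH (x, y) hp
    rw [pdx_pdx_interior hηC hp, pdy_pdy_interior hηC hp] at this
    linarith
  have huh : fderiv ℝ (fderiv ℝ u) (x, y) (0, 1) (0, 1) = -C1 := by
    have := huH (x, y) hp
    rw [pdx_pdx_interior huC hp, pdy_pdy_interior huC hp] at this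
    linarith
  -- symmetry
  have hηs : fderiv ℝ (fderiv ℝ η) (x, y) (0, 1) (1, 0) = A2 := symm2 hηC hp (0, 1) (1, 0)
  have hus : fderiv ℝ (fderiv ℝ u) (x, y) (0, 1) (1, 0) = C2 := symm2 huC hp (0, 1) (1, 0)
  -- horizontal slice blocks
  have hax : HasDerivAt (fun t => pdx η (t, y)) A1 x := hasDerivAt_pd_x hηC hp (1, 0)
  have hbx : HasDerivAt (fun t => pdy η (t, y)) A2 x := hasDerivAt_pd_x hηC hp (0, 1)
  have hcx : HasDerivAt (fun t => pdx u (t, y)) C1 x := hasDerivAt_pd_x huC hp (1, 0)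
  have hdx : HasDerivAt (fun t => pdy u (t, y)) C2 x := hasDerivAt_pd_x huC hp (0, 1)
  -- vertical slice blocks
  have hay : HasDerivAt (fun s => pdx η (x, s)) A2 y := by
    have h := hasDerivAt_pd_y hηC hp (1, 0); rwa [hηs] at h
  have hby : HasDerivAt (fun s => pdy η (x, s)) (-A1) y := by
    have h := hasDerivAt_pd_y hηC hp (0, 1); rwa [hηh] at h
  have hcy : HasDerivAt (fun s => pdx u (x, s)) C2 y := by
    have h := hasDerivAt_pd_y huC hp (1, 0); rwa [hus] at h
  have hdy : HasDerivAt (fun s => pdy u (x, s)) (-C1) y := by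
    have h := hasDerivAt_pd_y huC hp (0, 1); rwa [huh] at h
  -- assembled derivative of Q in the vertical direction
  have hQ := ((hay.mul ((hdy.pow 2).sub (hcy.pow 2))).sub
      ((((hasDerivAt_const y (2:ℝ)).mul hby).mul hcy).mul hdy)).div
      (((hay.pow 2).add (hby.pow 2))) hden0
  -- assembled derivative of P in the horizontal direction
  have hP := ((hbx.mul ((hdx.pow 2).sub (hcx.pow 2))).add
      ((((hasDerivAt_const x (2:ℝ)).mul hax).mul hcx).mul hdx)).div
      (((hax.pow 2).add (hbx.pow 2))) hden0
  -- the within-derivative of P equals the assembled one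
  have hP' : HasDerivAt (fun t => PP η u (t, y)) (pdx (PP η u) (x, y)) x :=
    hasDerivAt_slice_x (PP_contDiffOn hηC huC hgrad) hpS x
  have hPeq : pdx (PP η u) (x, y) = _ := hP'.unique hP
  rw [hPeq]
  refine hQ.congr_deriv ?_
  push_cast
  simp only [Pi.add_apply, Pi.mul_apply, Pi.sub_apply, Pi.pow_apply, Pi.div_apply]
  field_simp
  ring

/-- Green-type identity for the flux pair `(PP, QQ)` on a rectangle. -/
lemma main_step {η u : ℝ × ℝ → ℝ} (hηC : ContDiffOn ℝ 2 η strip)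
    (huC : ContDiffOn ℝ 2 u strip)
    (hηH : ∀ p ∈ stripO, pdx (pdx η) p + pdy (pdy η) p = 0)
    (huH : ∀ p ∈ stripO, pdx (pdx u) p + pdy (pdy u) p = 0)
    (hgrad : ∀ p ∈ strip, 0 < (pdx η p) ^ 2 + (pdy η p) ^ 2)
    {x₁ x₂ : ℝ} (h12 : x₁ ≤ x₂) :
    (∫ y in (0:ℝ)..1, PP η u (x₂, y)) - (∫ y in (0:ℝ)..1, PP η u (x₁, y))
      = ∫ x in x₁..x₂, (QQ η u (x, 0) - QQ η u (x, 1)) := by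
  have hPP1 := PP_contDiffOn hηC huC hgrad
  have hQQ1 := QQ_contDiffOn hηC huC hgrad
  have hPxCont : ContinuousOn (pdx (PP η u)) strip := hasDerivAt_slice_y_cont hPP1
  -- continuity of vertical slices of PP and QQ on [0,1]
  have hPcV : ∀ x : ℝ, ContinuousOn (fun y => PP η u (x, y)) (Icc 0 1) := fun x =>
    hPP1.continuousOn.comp (Continuous.continuousOn (by fun_prop)) (fun y hy => hy)
  have hQcV : ∀ x : ℝ, ContinuousOn (fun y => QQ η u (x, y)) (Icc 0 1) := fun x =>
    hQQ1.continuousOn.comp (Continuous.continuousOn (by fun_prop)) (fun y hy => hy)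
  -- continuity of horizontal slices of pdx PP
  have hPxH : ∀ y ∈ Icc (0:ℝ) 1, Continuous (fun x => pdx (PP η u) (x, y)) := fun y hy =>
    hPxCont.comp_continuous (by fun_prop) (fun x => hy)
  -- continuity of (y, x) ↦ pdx PP (x, y) on the rectangle, for Fubini
  have hPxRect : IntegrableOn (fun z : ℝ × ℝ => pdx (PP η u) (z.2, z.1))
      ((Ioc (0:ℝ) 1) ×ˢ (Ioc x₁ x₂)) := by
    apply MeasureTheory.IntegrableOn.mono_set (t := (Icc (0:ℝ) 1) ×ˢ (Icc x₁ x₂))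
    · apply ContinuousOn.integrableOn_compact (isCompact_Icc.prod isCompact_Icc)
      apply hPxCont.comp (by fun_prop : Continuous fun z : ℝ × ℝ => ((z.2, z.1) : ℝ × ℝ)).continuousOn
      intro z hz
      exact hz.1
    · exact Set.prod_mono Ioc_subset_Icc_self Ioc_subset_Icc_self
  -- Step 1: FTC in the horizontal direction
  have hftc : ∀ y ∈ Icc (0:ℝ) 1,
      PP η u (x₂, y) - PP η u (x₁, y) = ∫ x in x₁..x₂, pdx (PP η u) (x, y) := by
    intro y hy
    rw [intervalIntegral.integral_eq_sub_of_hasDerivAt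
      (fun x _ => hasDerivAt_slice_x hPP1 hy x) ((hPxH y hy).intervalIntegrable x₁ x₂)]
  -- Step 2: FTC in the vertical direction
  have hftcV : ∀ x : ℝ, (∫ y in (0:ℝ)..1, pdx (PP η u) (x, y))
      = QQ η u (x, 0) - QQ η u (x, 1) := by
    intro x
    have hder : ∀ y ∈ Ioo (0:ℝ) 1,
        HasDerivAt (fun s => QQ η u (x, s)) (-(pdx (PP η u) (x, y))) y := fun y hy =>
      core_deriv hηC huC hηH huH hgrad hy
    have hint : IntervalIntegrable (fun y => -(pdx (PP η u) (x, y))) volume 0 1 := by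
      apply ContinuousOn.intervalIntegrable
      rw [uIcc_of_le zero_le_one]
      exact (hPxCont.comp (Continuous.continuousOn
        (by fun_prop : Continuous fun y : ℝ => ((x, y) : ℝ × ℝ))) (fun y hy => hy)).neg
    have := intervalIntegral.integral_eq_sub_of_hasDerivAt_of_le zero_le_one
      (hQcV x) hder hint
    have h2 : (∫ y in (0:ℝ)..1, -(pdx (PP η u) (x, y)))
        = - ∫ y in (0:ℝ)..1, pdx (PP η u) (x, y) := intervalIntegral.integral_neg
    rw [h2] at this
    linarith
  -- Step 3: put together, using Fubini
  have hIcc : ∀ x : ℝ, IntervalIntegrable (fun y => PP η u (x, y)) volume 0 1 := by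
    intro x
    apply ContinuousOn.intervalIntegrable
    rw [uIcc_of_le zero_le_one]
    exact hPcV x
  rw [← intervalIntegral.integral_sub (hIcc x₂) (hIcc x₁)]
  have hcongr : (∫ y in (0:ℝ)..1, (PP η u (x₂, y) - PP η u (x₁, y)))
      = ∫ y in (0:ℝ)..1, ∫ x in x₁..x₂, pdx (PP η u) (x, y) := by
    apply intervalIntegral.integral_congr
    intro y hy
    rw [uIcc_of_le zero_le_one] at hy
    exact hftc y hy
  rw [hcongr]
  -- Fubini swap
  have hswap : (∫ y in (0:ℝ)..1, ∫ x in x₁..x₂, pdx (PP η u) (x, y))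
      = ∫ x in x₁..x₂, ∫ y in (0:ℝ)..1, pdx (PP η u) (x, y) := by
    rw [intervalIntegral.integral_of_le zero_le_one, intervalIntegral.integral_of_le h12]
    simp_rw [intervalIntegral.integral_of_le h12, intervalIntegral.integral_of_le zero_le_one]
    apply MeasureTheory.integral_integral_swap
    rw [Function.uncurry_def]
    rw [MeasureTheory.Measure.prod_restrict]
    rw [← MeasureTheory.Measure.volume_eq_prod]
    exact hPxRect
  rw [hswap]
  apply intervalIntegral.integral_congr
  intro x hx
  exact hftcV x

/-- Invariance of the flow force: for a solution `(η, ζ, ϑ)` of the conformally mapped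
electrohydrodynamic system on the strip with nonvanishing `∇η`, the flow force
`S(x) = (1/2)∫₀¹ (η_y(ζ_y² − ζ_x²) + 2η_xζ_xζ_y)/(η_x² + η_y²) dy
      + (ε₁/2)∫₀¹ (η_y(ϑ_y² − ϑ_x²) + 2η_xϑ_xϑ_y)/(η_x² + η_y²) dy
      − ((γ²/6)η(x,1)³ + (α/2)η(x,1)² − ((2α+1+ε₁)/2)η(x,1))`
is independent of `x`. -/
theorem stmt_13 (γ ε₁ α : ℝ) (hε₁ : 0 < ε₁)
    (η ζ ϑ : ℝ × ℝ → ℝ)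
    (hηC : ContDiffOn ℝ 2 η strip) (hζC : ContDiffOn ℝ 2 ζ strip)
    (hϑC : ContDiffOn ℝ 2 ϑ strip)
    (hηH : ∀ p ∈ stripO, pdx (pdx η) p + pdy (pdy η) p = 0)
    (hζH : ∀ p ∈ stripO, pdx (pdx ζ) p + pdy (pdy ζ) p = 0)
    (hϑH : ∀ p ∈ stripO, pdx (pdx ϑ) p + pdy (pdy ϑ) p = 0)
    (hgrad : ∀ p ∈ strip, 0 < (pdx η p) ^ 2 + (pdy η p) ^ 2)
    (hΓ1 : ∀ x : ℝ, ζ (x, 1) = 1 - γ / 2 - (γ / 2) * (η (x, 1)) ^ 2)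
    (hΓ2 : ∀ x : ℝ,
      (pdy ζ (x, 1) + γ * η (x, 1) * pdy η (x, 1)) ^ 2 + ε₁ * (pdy ϑ (x, 1)) ^ 2
        = (1 + ε₁ - 2 * α * (η (x, 1) - 1))
            * ((pdx η (x, 1)) ^ 2 + (pdy η (x, 1)) ^ 2))
    (hΓ3 : ∀ x : ℝ, ϑ (x, 1) = 1)
    (hB : ∀ x : ℝ, η (x, 0) = 0 ∧ ζ (x, 0) = 0 ∧ ϑ (x, 0) = 0) :
    let S : ℝ → ℝ := fun x =>
      (1 / 2) * (∫ y in (0 : ℝ)..1,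
        (pdy η (x, y) * ((pdy ζ (x, y)) ^ 2 - (pdx ζ (x, y)) ^ 2)
            + 2 * pdx η (x, y) * pdx ζ (x, y) * pdy ζ (x, y))
          / ((pdx η (x, y)) ^ 2 + (pdy η (x, y)) ^ 2))
      + (ε₁ / 2) * (∫ y in (0 : ℝ)..1,
        (pdy η (x, y) * ((pdy ϑ (x, y)) ^ 2 - (pdx ϑ (x, y)) ^ 2)
            + 2 * pdx η (x, y) * pdx ϑ (x, y) * pdy ϑ (x, y))
          / ((pdx η (x, y)) ^ 2 + (pdy η (x, y)) ^ 2))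
      - ((γ ^ 2 / 6) * (η (x, 1)) ^ 3 + (α / 2) * (η (x, 1)) ^ 2
          - ((2 * α + 1 + ε₁) / 2) * η (x, 1))
    ∀ x₁ x₂ : ℝ, S x₁ = S x₂ := by
  intro S
  have hη1C : ContDiffOn ℝ 1 η strip := hηC.of_le (by norm_num)
  have hζ1C : ContDiffOn ℝ 1 ζ strip := hζC.of_le (by norm_num)
  have hϑ1C : ContDiffOn ℝ 1 ϑ strip := hϑC.of_le (by norm_num)
  have h0m : (0:ℝ) ∈ Icc (0:ℝ) 1 := left_mem_Icc.2 zero_le_one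
  have h1m : (1:ℝ) ∈ Icc (0:ℝ) 1 := right_mem_Icc.2 zero_le_one
  -- trace derivative of η along the top
  have hη1 : ∀ x : ℝ, HasDerivAt (fun t => η (t, 1)) (pdx η (x, 1)) x := fun x =>
    hasDerivAt_slice_x hη1C h1m x
  -- boundary values of horizontal partials
  have traceconst : ∀ (u : ℝ × ℝ → ℝ), ContDiffOn ℝ 1 u strip → ∀ (c y : ℝ), y ∈ Icc (0:ℝ) 1 →
      (∀ t : ℝ, u (t, y) = c) → ∀ x : ℝ, pdx u (x, y) = 0 := by
    intro u huC c y hy hc x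
    have h := hasDerivAt_slice_x huC hy x
    have h0 : (fun t => u (t, y)) = fun _ => c := funext hc
    rw [h0] at h
    exact h.unique (hasDerivAt_const x c)
  have hη0 : ∀ x : ℝ, pdx η (x, 0) = 0 :=
    traceconst η hη1C 0 0 h0m (fun t => (hB t).1)
  have hζ0 : ∀ x : ℝ, pdx ζ (x, 0) = 0 :=
    traceconst ζ hζ1C 0 0 h0m (fun t => (hB t).2.1)
  have hϑ0 : ∀ x : ℝ, pdx ϑ (x, 0) = 0 :=
    traceconst ϑ hϑ1C 0 0 h0m (fun t => (hB t).2.2)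
  have hϑ1 : ∀ x : ℝ, pdx ϑ (x, 1) = 0 :=
    traceconst ϑ hϑ1C 1 1 h1m hΓ3
  -- top trace of pdx ζ
  have hζ1 : ∀ x : ℝ, pdx ζ (x, 1) = -(γ * η (x, 1) * pdx η (x, 1)) := by
    intro x
    have h := hasDerivAt_slice_x hζ1C h1m x
    have h0 : (fun t => ζ (t, 1)) = fun t => (1 - γ / 2) - γ / 2 * (η (t, 1)) ^ 2 := by
      funext t; rw [hΓ1 t]
    rw [h0] at h
    have hrhs : HasDerivAt (fun t => (1 - γ / 2) - γ / 2 * (η (t, 1)) ^ 2)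
        (0 - γ / 2 * ((2 : ℕ) * (η (x, 1)) ^ (2 - 1) * pdx η (x, 1))) x :=
      (hasDerivAt_const x (1 - γ / 2)).sub (((hη1 x).pow 2).const_mul (γ / 2))
    have := h.unique hrhs
    rw [this]
    push_cast
    ring
  -- boundary vanishing of QQ at the bottom
  have hQζ0 : ∀ x : ℝ, QQ η ζ (x, 0) = 0 := by
    intro x; unfold QQ; rw [hη0 x, hζ0 x]; ring
  have hQϑ0 : ∀ x : ℝ, QQ η ϑ (x, 0) = 0 := by
    intro x; unfold QQ; rw [hη0 x, hϑ0 x]; ring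
  -- derivative of the top boundary polynomial term
  set polyD : ℝ → ℝ := fun x =>
    ((γ ^ 2 / 2) * (η (x, 1)) ^ 2 + α * η (x, 1) - (2 * α + 1 + ε₁) / 2) * pdx η (x, 1)
    with hpolyD
  have hpolyDer : ∀ x : ℝ, HasDerivAt (fun t =>
      (γ ^ 2 / 6) * (η (t, 1)) ^ 3 + (α / 2) * (η (t, 1)) ^ 2
        - ((2 * α + 1 + ε₁) / 2) * η (t, 1)) (polyD x) x := by
    intro x
    have h := ((((hη1 x).pow 3).const_mul (γ ^ 2 / 6)).add
      (((hη1 x).pow 2).const_mul (α / 2))).sub ((hη1 x).const_mul ((2 * α + 1 + ε₁) / 2))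
    refine h.congr_deriv ?_
    push_cast
    rw [hpolyD]
    ring
  -- the key pointwise identity on the top boundary
  have hkey : ∀ x : ℝ,
      (1 / 2) * (QQ η ζ (x, 0) - QQ η ζ (x, 1))
        + (ε₁ / 2) * (QQ η ϑ (x, 0) - QQ η ϑ (x, 1)) - polyD x = 0 := by
    intro x
    have hw : (pdx η (x, 1)) ^ 2 + (pdy η (x, 1)) ^ 2 ≠ 0 := ne_of_gt (hgrad _ h1m)
    rw [hQζ0 x, hQϑ0 x, hpolyD]
    unfold QQ
    rw [hζ1 x, hϑ1 x]
    have hcalc : (1 / 2) * ((0:ℝ) -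
          (pdx η (x, 1) * ((pdy ζ (x, 1)) ^ 2 - (-(γ * η (x, 1) * pdx η (x, 1))) ^ 2)
            - 2 * pdy η (x, 1) * (-(γ * η (x, 1) * pdx η (x, 1))) * pdy ζ (x, 1))
            / ((pdx η (x, 1)) ^ 2 + (pdy η (x, 1)) ^ 2))
        + (ε₁ / 2) * ((0:ℝ) -
          (pdx η (x, 1) * ((pdy ϑ (x, 1)) ^ 2 - (0:ℝ) ^ 2)
            - 2 * pdy η (x, 1) * 0 * pdy ϑ (x, 1))
            / ((pdx η (x, 1)) ^ 2 + (pdy η (x, 1)) ^ 2))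
        - ((γ ^ 2 / 2) * (η (x, 1)) ^ 2 + α * η (x, 1) - (2 * α + 1 + ε₁) / 2) * pdx η (x, 1)
      = (-(pdx η (x, 1) / 2)) *
          ((((pdy ζ (x, 1) + γ * η (x, 1) * pdy η (x, 1)) ^ 2 + ε₁ * (pdy ϑ (x, 1)) ^ 2)
            - (1 + ε₁ - 2 * α * (η (x, 1) - 1)) * ((pdx η (x, 1)) ^ 2 + (pdy η (x, 1)) ^ 2))
            / ((pdx η (x, 1)) ^ 2 + (pdy η (x, 1)) ^ 2)) := by
      field_simp
      ring
    rw [hcalc, hΓ2 x, sub_self, zero_div, mul_zero]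
  -- continuity facts
  have hQQζC := QQ_contDiffOn hηC hζC hgrad
  have hQQϑC := QQ_contDiffOn hηC hϑC hgrad
  have hη1 : ∀ x : ℝ, HasDerivAt (fun t => η (t, 1)) (pdx η (x, 1)) x := fun x =>
    hasDerivAt_slice_x hη1C h1m x
  have hQline : ∀ (u : ℝ × ℝ → ℝ), ContDiffOn ℝ 1 (QQ η u) strip → ∀ y, y ∈ Icc (0:ℝ) 1 →
      Continuous (fun x => QQ η u (x, y)) := by
    intro u hu y hy
    exact hu.continuousOn.comp_continuous
      (by fun_prop : Continuous fun x : ℝ => ((x, y) : ℝ × ℝ)) (fun x => hy)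
  have hpolyCont : Continuous polyD := by
    have c1 : Continuous fun x : ℝ => η (x, 1) :=
      hη1C.continuousOn.comp_continuous
        (by fun_prop : Continuous fun x : ℝ => ((x, (1:ℝ)) : ℝ × ℝ)) (fun x => h1m)
    have c2 : Continuous fun x : ℝ => pdx η (x, 1) :=
      (hasDerivAt_slice_y_cont hη1C).comp_continuous
        (by fun_prop : Continuous fun x : ℝ => ((x, (1:ℝ)) : ℝ × ℝ)) (fun x => h1m)
    rw [hpolyD]
    exact (((continuous_const.mul (c1.pow 2)).add (continuous_const.mul c1)).sub continuous_const).mul c2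
  -- rewrite S through the flux functions
  have hSx : ∀ x : ℝ, S x = (1/2) * (∫ y in (0:ℝ)..1, PP η ζ (x, y))
      + (ε₁/2) * (∫ y in (0:ℝ)..1, PP η ϑ (x, y))
      - (γ ^ 2 / 6 * η (x, 1) ^ 3 + α / 2 * η (x, 1) ^ 2
          - (2 * α + 1 + ε₁) / 2 * η (x, 1)) := fun x => rfl
  have key : ∀ a b : ℝ, a ≤ b → S a = S b := by
    intro a b hab
    have h1 := main_step hηC hζC hηH hζH hgrad hab
    have h2 := main_step hηC hϑC hηH hϑH hgrad hab
    have h3 : (∫ x in a..b, polyD x)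
        = (γ ^ 2 / 6 * η (b, 1) ^ 3 + α / 2 * η (b, 1) ^ 2
            - (2 * α + 1 + ε₁) / 2 * η (b, 1))
          - (γ ^ 2 / 6 * η (a, 1) ^ 3 + α / 2 * η (a, 1) ^ 2
            - (2 * α + 1 + ε₁) / 2 * η (a, 1)) :=
      intervalIntegral.integral_eq_sub_of_hasDerivAt (fun x _ => hpolyDer x)
        (hpolyCont.intervalIntegrable a b)
    have iζ : IntervalIntegrable (fun x => QQ η ζ (x, 0) - QQ η ζ (x, 1)) volume a b :=
      ((hQline ζ hQQζC 0 h0m).sub (hQline ζ hQQζC 1 h1m)).intervalIntegrable a b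
    have iϑ : IntervalIntegrable (fun x => QQ η ϑ (x, 0) - QQ η ϑ (x, 1)) volume a b :=
      ((hQline ϑ hQQϑC 0 h0m).sub (hQline ϑ hQQϑC 1 h1m)).intervalIntegrable a b
    have hcomb : (1/2) * (∫ x in a..b, (QQ η ζ (x, 0) - QQ η ζ (x, 1)))
        + (ε₁/2) * (∫ x in a..b, (QQ η ϑ (x, 0) - QQ η ϑ (x, 1)))
        - (∫ x in a..b, polyD x) = 0 := by
      rw [← intervalIntegral.integral_const_mul, ← intervalIntegral.integral_const_mul,
        ← intervalIntegral.integral_add (iζ.const_mul _) (iϑ.const_mul _),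
        ← intervalIntegral.integral_sub
          ((iζ.const_mul _).add (iϑ.const_mul _)) (hpolyCont.intervalIntegrable a b)]
      rw [intervalIntegral.integral_congr (g := fun _ => (0:ℝ)) (fun x _ => hkey x)]
      simp
    rw [hSx a, hSx b]
    linear_combination -(1/2) * h1 - (ε₁/2) * h2 - h3 - hcomb
  intro x₁ x₂
  rcases le_total x₁ x₂ with h | h
  · exact key x₁ x₂ h
  · exact (key x₂ x₁ h).symm
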